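/- (Weak completeness of L.) If φ ∈ Φ and ⊬_L φ, then there is a stochastic game (S, F, D, P, π) and a non-failure state s ∈ F̄ such that s ⊮ φ. -/

import Mathlib

/-- The interval [0,1] of real numbers, used for probability subscripts. -/
abbrev I01 : Type := Set.Icc (0 : ℝ) 1

/-- Formulae of the language Φ: propositional variables, ⊥, negation,
implication, and the coalition modality [C]_p φ with C ⊆ A and p ∈ [0,1]. -/
inductive Formula (A V : Type) : Type where
  | var : V → Formula A V
  | falsum : Formula A V
  | neg : Formula A V → Formula A V
  | imp : Formula A V → Formula A V → Formula A V
  | mod : Set A → I01 → Formula A V → Formula A V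

/-- The constant ⊤, defined in the standard way. -/
def Formula.top {A V : Type} : Formula A V := Formula.neg Formula.falsum

/-- Propositional tautologies: true under every Boolean valuation of formulae
that respects ¬, → and ⊥ (treating variables and modal formulae as atoms). -/
def Tautology {A V : Type} (φ : Formula A V) : Prop :=
  ∀ f : Formula A V → Bool,
    (∀ ψ, f (Formula.neg ψ) = !(f ψ)) →
    (∀ ψ χ, f (Formula.imp ψ χ) = (!(f ψ) || f χ)) →
    f Formula.falsum = false →
    f φ = true

noncomputable def iZero : I01 := ⟨0, by norm_num⟩
noncomputable def iOne : I01 := ⟨1, by norm_num⟩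

/-- The sublanguage Φ⁺: every modality has a nonempty coalition. -/
inductive Formula.InPlus {A V : Type} : Formula A V → Prop where
  | var (v : V) : Formula.InPlus (Formula.var v)
  | falsum : Formula.InPlus Formula.falsum
  | neg {φ} : Formula.InPlus φ → Formula.InPlus (Formula.neg φ)
  | imp {φ ψ} : Formula.InPlus φ → Formula.InPlus ψ →
      Formula.InPlus (Formula.imp φ ψ)
  | mod {C : Set A} (p : I01) {φ} : C.Nonempty → Formula.InPlus φ →
      Formula.InPlus (Formula.mod C p φ)

/-- Theorems of the logical system L (language Φ). -/
inductive LProof {A V : Type} : Formula A V → Prop where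
  | taut {φ : Formula A V} : Tautology φ → LProof φ
  | coop (C₁ C₂ : Set A) (p q : I01) (φ ψ : Formula A V) :
      C₁ ∩ C₂ = ∅ →
      LProof (Formula.imp (Formula.mod C₁ p (Formula.imp φ ψ))
        (Formula.imp (Formula.mod C₂ q φ) (Formula.mod (C₁ ∪ C₂) (max p q) ψ)))
  | mono (C : Set A) (p q : I01) (φ : Formula A V) : q ≤ p →
      LProof (Formula.imp (Formula.mod C p φ) (Formula.mod C q φ))
  | unach (C : Set A) (p : I01) : (0 : ℝ) < (p : ℝ) →
      LProof (Formula.neg (Formula.mod C p Formula.falsum))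
  | mp {φ ψ : Formula A V} : LProof (Formula.imp φ ψ) → LProof φ → LProof ψ
  | nec (C : Set A) {φ : Formula A V} : LProof φ → LProof (Formula.mod C iZero φ)

/-- Theorems of the logical system L⁺ (language Φ⁺):
the axioms of L restricted to Φ⁺, Modus Ponens, Necessitation,
and the Monotonicity inference rule. -/
inductive LPlusProof {A V : Type} : Formula A V → Prop where
  | taut {φ : Formula A V} : Tautology φ → Formula.InPlus φ → LPlusProof φ
  | coop (C₁ C₂ : Set A) (p q : I01) (φ ψ : Formula A V) :
      C₁.Nonempty → C₂.Nonempty → C₁ ∩ C₂ = ∅ →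
      Formula.InPlus φ → Formula.InPlus ψ →
      LPlusProof (Formula.imp (Formula.mod C₁ p (Formula.imp φ ψ))
        (Formula.imp (Formula.mod C₂ q φ) (Formula.mod (C₁ ∪ C₂) (max p q) ψ)))
  | mono (C : Set A) (p q : I01) (φ : Formula A V) :
      C.Nonempty → Formula.InPlus φ → q ≤ p →
      LPlusProof (Formula.imp (Formula.mod C p φ) (Formula.mod C q φ))
  | unach (C : Set A) (p : I01) : C.Nonempty → (0 : ℝ) < (p : ℝ) →
      LPlusProof (Formula.neg (Formula.mod C p Formula.falsum))
  | mp {φ ψ : Formula A V} : LPlusProof (Formula.imp φ ψ) → LPlusProof φ → LPlusProof ψ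
  | nec (C : Set A) {φ : Formula A V} : C.Nonempty → LPlusProof φ →
      LPlusProof (Formula.mod C iZero φ)
  | monoRule (C : Set A) (p : I01) {φ ψ : Formula A V} : C.Nonempty →
      LPlusProof (Formula.imp φ ψ) →
      LPlusProof (Formula.imp (Formula.mod C p φ) (Formula.mod C p ψ))

/-- X ⊢ φ: derivability of φ from the theorems of the system (given by the
theoremhood predicate `Pf`) together with the formulae of X, using only
the Modus Ponens inference rule. -/
inductive Deriv {A V : Type} (Pf : Formula A V → Prop) (X : Set (Formula A V)) :
    Formula A V → Prop where
  | thm {φ} : Pf φ → Deriv Pf X φ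
  | ax {φ} : φ ∈ X → Deriv Pf X φ
  | mp {φ ψ} : Deriv Pf X (Formula.imp φ ψ) → Deriv Pf X φ → Deriv Pf X ψ

/-- A set X is consistent if X ⊬ ⊥. -/
def Consistent {A V : Type} (Pf : Formula A V → Prop) (X : Set (Formula A V)) : Prop :=
  ¬ Deriv Pf X Formula.falsum

/-- A maximal consistent subset of a given language `Lang`. -/
def MaxConsistentIn {A V : Type} (Pf : Formula A V → Prop)
    (Lang : Set (Formula A V)) (X : Set (Formula A V)) : Prop :=
  X ⊆ Lang ∧ Consistent Pf X ∧
    ∀ Y : Set (Formula A V), Y ⊆ Lang → Consistent Pf Y → X ⊆ Y → Y = X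

/-- A stochastic game (S, F, D, P, π). -/
structure Game (A V : Type) where
  S : Type
  F : Set S
  D : Type
  D_nonempty : Nonempty D
  P : S → (A → D) → S → ℝ
  P_nonneg : ∀ s δ s', 0 ≤ P s δ s'
  P_le_one : ∀ s δ s', P s δ s' ≤ 1
  P_sum : ∀ s δ, HasSum (P s δ) 1
  pi : V → Set S

/-- Satisfaction s ⊩ φ, for the game with failure states F, transition
probabilities P and valuation π.  In the modal clause, δ ranges over action
profiles of the coalition C and δ' over complete action profiles extending δ. -/
def SatGen {A V S D : Type} (F : Set S) (P : S → (A → D) → S → ℝ)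
    (π : V → Set S) : Formula A V → S → Prop
  | Formula.var v, s => s ∈ π v
  | Formula.falsum, _ => False
  | Formula.neg φ, s => ¬ SatGen F P π φ s
  | Formula.imp φ ψ, s => SatGen F P π φ s → SatGen F P π ψ s
  | Formula.mod C p φ, s =>
      ∃ δ : ↥C → D, ∀ δ' : A → D, (∀ a : ↥C, δ' a.1 = δ a) →
        ((p : ℝ) ≤ ∑' t : ↥(Fᶜ), P s δ' t.1) ∧
        (∀ t : S, t ∉ F → 0 < P s δ' t → SatGen F P π φ t)

/-- Semantic entailment X ⊨ φ over all stochastic games and their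
non-failure states. -/
def Entails {A V : Type} (X : Set (Formula A V)) (φ : Formula A V) : Prop :=
  ∀ (G : Game A V) (s : G.S), s ∉ G.F →
    (∀ χ ∈ X, SatGen G.F G.P G.pi χ s) → SatGen G.F G.P G.pi φ s

/-- The subscript 1 − 10⁻ⁿ as an element of [0,1]. -/
noncomputable def oneMinusTenPow (n : ℕ) : I01 :=
  ⟨1 - (1 / 10 : ℝ) ^ n, by
    constructor
    · have h : (1 / 10 : ℝ) ^ n ≤ 1 := pow_le_one₀ (by norm_num) (by norm_num)
      linarith
    · have h : (0 : ℝ) ≤ (1 / 10 : ℝ) ^ n := by positivity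
      linarith⟩

/- ## The canonical stochastic game G(Ψ,Σ) -/

/-- Σ is closed with respect to subformulae. -/
def SubfClosed {A V : Type} (Sgm : Set (Formula A V)) : Prop :=
  (∀ φ, Formula.neg φ ∈ Sgm → φ ∈ Sgm) ∧
  (∀ φ ψ, Formula.imp φ ψ ∈ Sgm → φ ∈ Sgm ∧ ψ ∈ Sgm) ∧
  (∀ (C : Set A) (p : I01) φ, Formula.mod C p φ ∈ Sgm → φ ∈ Sgm)

/-- If σ ∈ Σ then ¬σ ∈ Σ, unless σ is itself a negation. -/
def NegClosed {A V : Type} (Sgm : Set (Formula A V)) : Prop :=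
  ∀ σ ∈ Sgm, (∀ τ, σ ≠ Formula.neg τ) → Formula.neg σ ∈ Sgm

/-- Non-failure states of the canonical game: maximal consistent subsets of Σ. -/
abbrev CanState {A V : Type} (Pf : Formula A V → Prop) (Sgm : Set (Formula A V)) : Type :=
  {s : Set (Formula A V) // MaxConsistentIn Pf Sgm s}

/-- The domain of actions of the canonical game: pairs (φ,p) with φ ∈ Σ and
p an arbitrary real number. -/
abbrev CanD {A V : Type} (Sgm : Set (Formula A V)) : Type := ↥Sgm × ℝ

/-- The set { p | [C]_p φ ∈ s and δ(a) = (φ,p) for all a ∈ C }. -/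
def muSet {A V : Type} (Pf : Formula A V → Prop) (Sgm : Set (Formula A V))
    (s : CanState Pf Sgm) (δ : A → CanD Sgm) : Set ℝ :=
  {r | ∃ (C : Set A) (p : I01) (φ : Formula A V), (p : ℝ) = r ∧
    Formula.mod C p φ ∈ s.1 ∧ ∀ a ∈ C, (δ a).1.1 = φ ∧ (δ a).2 = (p : ℝ)}

/-- μ(s,δ) = max{ p | [C]_p φ ∈ s and δ(a) = (φ,p) for all a ∈ C },
the maximum of the empty set being 0. -/
noncomputable def muCan {A V : Type} (Pf : Formula A V → Prop) (Sgm : Set (Formula A V))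
    (s : CanState Pf Sgm) (δ : A → CanD Sgm) : ℝ :=
  sSup (insert 0 (muSet Pf Sgm s δ))

/-- T(s,δ): all non-failure states s' with
{ φ | [C]_p φ ∈ s and δ(a) = (φ,p) for all a ∈ C } ⊆ s'. -/
def TCan {A V : Type} (Pf : Formula A V → Prop) (Sgm : Set (Formula A V))
    (s : CanState Pf Sgm) (δ : A → CanD Sgm) : Set (CanState Pf Sgm) :=
  {s' | ∀ φ : Formula A V,
    (∃ (C : Set A) (p : I01), Formula.mod C p φ ∈ s.1 ∧
      ∀ a ∈ C, (δ a).1.1 = φ ∧ (δ a).2 = (p : ℝ)) → φ ∈ s'.1}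

-- The transition probabilities of the canonical game; `none` is the failure state f.
open Classical in
noncomputable def PCan {A V : Type} (Pf : Formula A V → Prop) (Sgm : Set (Formula A V))
    (s : Option (CanState Pf Sgm)) (δ : A → CanD Sgm)
    (s' : Option (CanState Pf Sgm)) : ℝ :=
  match s, s' with
  | none, none => 1
  | none, some _ => 0
  | some t, none => 1 - muCan Pf Sgm t δ
  | some t, some t' =>
      if t' ∈ TCan Pf Sgm t δ then muCan Pf Sgm t δ / (TCan Pf Sgm t δ).ncard else 0

/-- The valuation of the canonical game: π(v) = { s ∈ F̄ | v ∈ s }. -/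
def piCan {A V : Type} (Pf : Formula A V → Prop) (Sgm : Set (Formula A V))
    (v : V) : Set (Option (CanState Pf Sgm)) :=
  {x | ∃ t : CanState Pf Sgm, x = some t ∧ Formula.var v ∈ t.1}


-- ================== PART 1 ==================
namespace WCL
open Formula
variable {A V : Type}

lemma deriv_mono {Pf : Formula A V → Prop} {X Y : Set (Formula A V)} (hXY : X ⊆ Y)
    {φ : Formula A V} (h : Deriv Pf X φ) : Deriv Pf Y φ := by
  induction h with
  | thm h => exact Deriv.thm h
  | ax h => exact Deriv.ax (hXY h)
  | mp _ _ ih1 ih2 => exact Deriv.mp ih1 ih2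

lemma taut_K (a b : Formula A V) : LProof (imp a (imp b a)) := by
  apply LProof.taut; intro f hn hi hf
  simp only [hi]; cases f a <;> cases f b <;> rfl

lemma taut_S (a b c : Formula A V) :
    LProof (imp (imp a (imp b c)) (imp (imp a b) (imp a c))) := by
  apply LProof.taut; intro f hn hi hf
  simp only [hi]; cases f a <;> cases f b <;> cases f c <;> rfl

lemma taut_I (a : Formula A V) : LProof (imp a a) := by
  apply LProof.taut; intro f hn hi hf
  simp only [hi]; cases f a <;> rfl

lemma taut_contr (a : Formula A V) : LProof (imp a (imp (neg a) falsum)) := by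
  apply LProof.taut; intro f hn hi hf
  simp only [hi, hn, hf]; cases f a <;> rfl

lemma taut_dne (a : Formula A V) : LProof (imp (imp (neg a) falsum) a) := by
  apply LProof.taut; intro f hn hi hf
  simp only [hi, hn, hf]; cases f a <;> rfl

lemma taut_efq (a b : Formula A V) : LProof (imp (imp a falsum) (imp a b)) := by
  apply LProof.taut; intro f hn hi hf
  simp only [hi, hf]; cases f a <;> cases f b <;> rfl

lemma taut_exf (a : Formula A V) : LProof (imp falsum a) := by
  apply LProof.taut; intro f hn hi hf
  simp only [hi, hf]; cases f a <;> rfl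

lemma taut_negintro (a : Formula A V) : LProof (imp (imp a falsum) (neg a)) := by
  apply LProof.taut; intro f hn hi hf
  simp only [hi, hn, hf]; cases f a <;> rfl

/-- Deduction theorem. -/
lemma deduction {X : Set (Formula A V)} {χ ψ : Formula A V}
    (h : Deriv LProof (insert χ X) ψ) : Deriv LProof X (imp χ ψ) := by
  induction h with
  | thm h => exact Deriv.mp (Deriv.thm (taut_K _ _)) (Deriv.thm h)
  | ax h =>
    rcases h with h | h
    · subst h; exact Deriv.thm (taut_I _)
    · exact Deriv.mp (Deriv.thm (taut_K _ _)) (Deriv.ax h)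
  | mp _ _ ih1 ih2 => exact Deriv.mp (Deriv.mp (Deriv.thm (taut_S _ _ _)) ih1) ih2

lemma deriv_empty {ψ : Formula A V} (h : Deriv LProof (∅ : Set (Formula A V)) ψ) :
    LProof ψ := by
  induction h with
  | thm h => exact h
  | ax h => exact absurd h (Set.notMem_empty _)
  | mp _ _ ih1 ih2 => exact LProof.mp ih1 ih2

lemma consistent_mono {Pf : Formula A V → Prop} {X Y : Set (Formula A V)}
    (h : Consistent Pf Y) (hXY : X ⊆ Y) : Consistent Pf X :=
  fun hd => h (deriv_mono hXY hd)

lemma deriv_finite {Pf : Formula A V → Prop} {X : Set (Formula A V)} {ψ : Formula A V}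
    (h : Deriv Pf X ψ) : ∃ Y ⊆ X, Y.Finite ∧ Deriv Pf Y ψ := by
  induction h with
  | thm h => exact ⟨∅, Set.empty_subset _, Set.finite_empty, Deriv.thm h⟩
  | ax h => exact ⟨{_}, Set.singleton_subset_iff.mpr h, Set.finite_singleton _,
      Deriv.ax rfl⟩
  | mp _ _ ih1 ih2 =>
    obtain ⟨Y₁, hs1, hf1, hd1⟩ := ih1
    obtain ⟨Y₂, hs2, hf2, hd2⟩ := ih2
    exact ⟨Y₁ ∪ Y₂, Set.union_subset hs1 hs2, hf1.union hf2,
      Deriv.mp (deriv_mono Set.subset_union_left hd1)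
        (deriv_mono Set.subset_union_right hd2)⟩

/-- membership from derivability, in a maximal consistent set -/
lemma mem_of_deriv {Sg X : Set (Formula A V)} (hX : MaxConsistentIn LProof Sg X)
    {σ : Formula A V} (hσ : σ ∈ Sg) (hd : Deriv LProof X σ) : σ ∈ X := by
  have hcons : Consistent LProof (insert σ X) := by
    intro hbot
    exact hX.2.1 (Deriv.mp (deduction hbot) hd)
  have := hX.2.2 (insert σ X) (Set.insert_subset hσ hX.1) hcons (Set.subset_insert _ _)
  rw [← this]; exact Set.mem_insert _ _

lemma deriv_neg_of_not_mem {Sg X : Set (Formula A V)} (hX : MaxConsistentIn LProof Sg X)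
    {σ : Formula A V} (hσ : σ ∈ Sg) (hns : σ ∉ X) : Deriv LProof X (imp σ falsum) := by
  apply deduction
  by_contra hcon
  have := hX.2.2 (insert σ X) (Set.insert_subset hσ hX.1) hcon (Set.subset_insert _ _)
  exact hns (this ▸ Set.mem_insert _ _)

lemma not_both {X : Set (Formula A V)} (hX : Consistent LProof X) {σ : Formula A V}
    (h1 : σ ∈ X) (h2 : neg σ ∈ X) : False :=
  hX (Deriv.mp (Deriv.mp (Deriv.thm (taut_contr σ)) (Deriv.ax h1)) (Deriv.ax h2))

lemma neg_mem_iff {Sg X : Set (Formula A V)} (hX : MaxConsistentIn LProof Sg X)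
    {σ : Formula A V} (hσ : σ ∈ Sg) (hnσ : neg σ ∈ Sg) : neg σ ∈ X ↔ σ ∉ X := by
  constructor
  · intro h1 h2; exact not_both hX.2.1 h2 h1
  · intro h
    exact mem_of_deriv hX hnσ
      (Deriv.mp (Deriv.thm (taut_negintro σ)) (deriv_neg_of_not_mem hX hσ h))

lemma imp_mem_iff {Sg X : Set (Formula A V)} (hX : MaxConsistentIn LProof Sg X)
    {σ τ : Formula A V} (hi : imp σ τ ∈ Sg) (hσ : σ ∈ Sg) (hτ : τ ∈ Sg) :
    imp σ τ ∈ X ↔ (σ ∈ X → τ ∈ X) := by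
  constructor
  · intro h hs
    exact mem_of_deriv hX hτ (Deriv.mp (Deriv.ax h) (Deriv.ax hs))
  · intro h
    by_cases hs : σ ∈ X
    · exact mem_of_deriv hX hi (Deriv.mp (Deriv.thm (taut_K τ σ)) (Deriv.ax (h hs)))
    · exact mem_of_deriv hX hi
        (Deriv.mp (Deriv.thm (taut_efq σ τ)) (deriv_neg_of_not_mem hX hσ hs))

/-- Lindenbaum for a finite language. -/
lemma lindenbaum {Sg X : Set (Formula A V)} (hSg : Sg.Finite) (hXSg : X ⊆ Sg)
    (hX : Consistent LProof X) :
    ∃ Y, X ⊆ Y ∧ MaxConsistentIn LProof Sg Y := by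
  have key : ∀ k (Y : Set (Formula A V)), Y ⊆ Sg → Consistent LProof Y →
      Sg.ncard - Y.ncard ≤ k → ∃ Z, Y ⊆ Z ∧ MaxConsistentIn LProof Sg Z := by
    intro k
    induction k with
    | zero =>
      intro Y hYSg hY hk
      refine ⟨Y, subset_rfl, hYSg, hY, ?_⟩
      intro Z hZSg hZ hYZ
      by_contra hne
      have hlt : Y ⊂ Z := ssubset_of_subset_of_ne hYZ (fun h => hne h.symm)
      have h1 : Y.ncard < Z.ncard := Set.ncard_lt_ncard hlt (hSg.subset hZSg)
      have h2 : Z.ncard ≤ Sg.ncard := Set.ncard_le_ncard hZSg hSg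
      have h3 : Y.ncard ≤ Sg.ncard := Set.ncard_le_ncard hYSg hSg
      omega
    | succ k ih =>
      intro Y hYSg hY hk
      by_cases hmax : ∀ Z, Z ⊆ Sg → Consistent LProof Z → Y ⊆ Z → Z = Y
      · exact ⟨Y, subset_rfl, hYSg, hY, hmax⟩
      · push_neg at hmax
        obtain ⟨Z, hZSg, hZ, hYZ, hne⟩ := hmax
        have hlt : Y ⊂ Z := ssubset_of_subset_of_ne hYZ (fun h => hne h.symm)
        have h1 : Y.ncard < Z.ncard := Set.ncard_lt_ncard hlt (hSg.subset hZSg)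
        have h2 : Z.ncard ≤ Sg.ncard := Set.ncard_le_ncard hZSg hSg
        obtain ⟨W, hZW, hW⟩ := ih Z hZSg hZ (by omega)
        exact ⟨W, hYZ.trans hZW, hW⟩
  obtain ⟨Z, hXZ, hZ⟩ := key (Sg.ncard) X hXSg hX (by omega)
  exact ⟨Z, hXZ, hZ⟩

end WCL
namespace WCL
open Formula
variable {A V : Type}

/-- subformulas -/
def SF : Formula A V → Set (Formula A V)
  | var v => {var v}
  | falsum => {falsum}
  | neg ψ => insert (neg ψ) (SF ψ)
  | imp ψ χ => insert (imp ψ χ) (SF ψ ∪ SF χ)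
  | mod C p ψ => insert (mod C p ψ) (SF ψ)

lemma SF_self (σ : Formula A V) : σ ∈ SF σ := by
  cases σ <;> simp [SF]

lemma SF_finite (σ : Formula A V) : (SF σ).Finite := by
  induction σ with
  | var v => exact Set.finite_singleton _
  | falsum => exact Set.finite_singleton _
  | neg ψ ih => exact ih.insert _
  | imp ψ χ ih1 ih2 => exact (ih1.union ih2).insert _
  | mod C p ψ ih => exact ih.insert _

lemma SF_trans {τ σ : Formula A V} (h : τ ∈ SF σ) : SF τ ⊆ SF σ := by
  induction σ with
  | var v => simp only [SF, Set.mem_singleton_iff] at h; subst h; exact subset_rfl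
  | falsum => simp only [SF, Set.mem_singleton_iff] at h; subst h; exact subset_rfl
  | neg ψ ih =>
    rcases h with h | h
    · subst h; exact subset_rfl
    · exact (ih h).trans (Set.subset_insert _ _)
  | imp ψ χ ih1 ih2 =>
    rcases h with h | h
    · subst h; exact subset_rfl
    · rcases h with h | h
      · exact ((ih1 h).trans Set.subset_union_left).trans (Set.subset_insert _ _)
      · exact ((ih2 h).trans Set.subset_union_right).trans (Set.subset_insert _ _)
  | mod C p ψ ih =>
    rcases h with h | h
    · subst h; exact subset_rfl
    · exact (ih h).trans (Set.subset_insert _ _)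

variable (φ₀ : Formula A V)

/-- the finite language -/
def Lang : Set (Formula A V) := SF φ₀ ∪ (Formula.neg '' SF φ₀)

lemma Lang_finite : (Lang φ₀).Finite := ((SF_finite φ₀).union ((SF_finite φ₀).image _))

lemma mem_Lang_of_SF {σ : Formula A V} (h : σ ∈ SF φ₀) : σ ∈ Lang φ₀ := Or.inl h

lemma neg_mem_Lang {σ : Formula A V} (h : σ ∈ SF φ₀) : neg σ ∈ Lang φ₀ :=
  Or.inr ⟨σ, h, rfl⟩

lemma Lang_neg {σ : Formula A V} (h : neg σ ∈ Lang φ₀) : σ ∈ Lang φ₀ := by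
  rcases h with h | ⟨τ, hτ, he⟩
  · exact Or.inl (SF_trans h (Or.inr (SF_self σ)))
  · cases he; exact Or.inl hτ

lemma Lang_imp {σ τ : Formula A V} (h : imp σ τ ∈ Lang φ₀) :
    σ ∈ SF φ₀ ∧ τ ∈ SF φ₀ := by
  rcases h with h | ⟨ρ, _, he⟩
  · have h1 := SF_trans h
    exact ⟨h1 (Or.inr (Or.inl (SF_self σ))), h1 (Or.inr (Or.inr (SF_self τ)))⟩
  · exact absurd he (by simp)

lemma Lang_mod {C : Set A} {p : I01} {σ : Formula A V} (h : mod C p σ ∈ Lang φ₀) :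
    σ ∈ SF φ₀ := by
  rcases h with h | ⟨ρ, _, he⟩
  · exact SF_trans h (Or.inr (SF_self σ))
  · exact absurd he (by simp)

/- ### matched modalities and the cooperation chain -/

/-- δ' matches the modality [Cw]_q χ of X -/
def Matched (X : Set (Formula A V)) (δ' : A → Formula A V × ℝ)
    (χ : Formula A V) (Cw : Set A) (q : I01) : Prop :=
  Formula.mod Cw q χ ∈ X ∧ ∀ a ∈ Cw, δ' a = (χ, (q : ℝ))

/-- the set of formulae forced by δ' at X -/
def Forced (X : Set (Formula A V)) (δ' : A → Formula A V × ℝ) :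
    Set (Formula A V) :=
  {χ | ∃ Cw q, Matched X δ' χ Cw q}

lemma iZero_le (p : I01) : iZero ≤ p := Subtype.mk_le_mk.mpr p.2.1

lemma peel (X : Set (Formula A V)) (δ' : A → Formula A V × ℝ) (C : Set A)
    (ψ : Formula A V) (w : Formula A V → Set A × I01) :
    ∀ (l : List (Formula A V)), l.Nodup →
    (∀ χ ∈ l, Matched X δ' χ (w χ).1 (w χ).2) →
    (∀ χ ∈ l, (w χ).1 ⊆ C) →
    ∀ (U : Set A) (q : I01), (∀ χ ∈ l, ∀ a ∈ (w χ).1, a ∉ U) → U ⊆ C →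
    Deriv LProof X (Formula.mod U q (l.foldr Formula.imp ψ)) →
    ∃ (U' : Set A) (q' : I01), U' ⊆ C ∧ q ≤ q' ∧
      (∀ χ ∈ l, (w χ).2 ≤ q') ∧ Deriv LProof X (Formula.mod U' q' ψ) := by
  intro l
  induction l with
  | nil =>
    intro _ _ _ U q _ hUC hd
    exact ⟨U, q, hUC, le_rfl, by simp, hd⟩
  | cons χ rest ih =>
    intro hnd hm hwC U q hdisj hUC hd
    have hmχ := hm χ (List.mem_cons_self)
    have hUCw : U ∩ (w χ).1 = ∅ := by
      ext a
      simp only [Set.mem_inter_iff, Set.mem_empty_iff_false, iff_false, not_and]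
      intro hU hCw
      exact hdisj χ (List.mem_cons_self) a hCw hU
    have hstep : Deriv LProof X
        (Formula.mod (U ∪ (w χ).1) (max q (w χ).2) (rest.foldr Formula.imp ψ)) := by
      have hcoop := LProof.coop U (w χ).1 q (w χ).2 χ (rest.foldr Formula.imp ψ) hUCw
      exact Deriv.mp (Deriv.mp (Deriv.thm hcoop) hd) (Deriv.ax hmχ.1)
    have hnd' := (List.nodup_cons.mp hnd).2
    have hχrest := (List.nodup_cons.mp hnd).1
    obtain ⟨U', q', hU'C, hle, hbds, hder⟩ :=
      ih hnd' (fun x hx => hm x (List.mem_cons_of_mem _ hx))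
        (fun x hx => hwC x (List.mem_cons_of_mem _ hx))
        (U ∪ (w χ).1) (max q (w χ).2)
        (by
          intro x hx a ha hmem
          rcases hmem with hmem | hmem
          · exact hdisj x (List.mem_cons_of_mem _ hx) a ha hmem
          · -- a in both (w χ).1 and (w x).1 with x ∈ rest
            have h1 := hmχ.2 a hmem
            have h2 := (hm x (List.mem_cons_of_mem _ hx)).2 a ha
            have : χ = x := by
              have := h1.symm.trans h2
              exact congrArg Prod.fst this
            exact hχrest (this ▸ hx))
        (Set.union_subset hUC (hwC χ (List.mem_cons_self))) hstep
    refine ⟨U', q', hU'C, le_trans (le_max_left _ _) hle, ?_, hder⟩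
    intro x hx
    rcases List.mem_cons.mp hx with hx | hx
    · subst hx; exact le_trans (le_max_right _ _) hle
    · exact hbds x hx

lemma list_deduction :
    ∀ (l : List (Formula A V)) (ψ : Formula A V), Deriv LProof {x | x ∈ l} ψ →
    LProof (l.foldl (fun θ χ => Formula.imp χ θ) ψ) := by
  intro l
  induction l with
  | nil =>
    intro ψ h
    show LProof ψ
    apply deriv_empty
    convert h using 1
    ext x; simp
  | cons χ rest ih =>
    intro ψ h
    have : ({x | x ∈ χ :: rest} : Set (Formula A V)) = insert χ {x | x ∈ rest} := by
      ext x; simp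
    rw [this] at h
    exact ih (imp χ ψ) (deduction h)

/-- Main cooperation lemma: if the forced set derives ψ, then X derives [C]_qt ψ,
provided all matched coalitions are inside C and qt is bounded by a matched strength
(or is zero). -/
lemma coop_main {X : Set (Formula A V)} {δ' : A → Formula A V × ℝ} {C : Set A}
    {ψ : Formula A V} {qt : I01}
    (hC : ∀ χ Cw q, Matched X δ' χ Cw q → Cw ⊆ C)
    (hΓψ : Deriv LProof (Forced X δ') ψ)
    (hq : qt = iZero ∨ ∃ χ₀ C₀ p₀, Matched X δ' χ₀ C₀ p₀ ∧ qt ≤ p₀) :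
    Deriv LProof X (Formula.mod C qt ψ) := by
  classical
  obtain ⟨Y₀, hY₀Γ, hY₀fin, hY₀d⟩ := deriv_finite hΓψ
  -- build Y₁ and the witness function
  obtain ⟨Y₁, w, hY₁fin, hY₁Γ, hY₁d, hw, hqbd⟩ :
      ∃ (Y₁ : Set (Formula A V)) (w : Formula A V → Set A × I01),
        Y₁.Finite ∧ Y₁ ⊆ Forced X δ' ∧ Deriv LProof Y₁ ψ ∧
        (∀ χ ∈ Y₁, Matched X δ' χ (w χ).1 (w χ).2) ∧
        (qt = iZero ∨ ∃ χ₀ ∈ Y₁, qt ≤ (w χ₀).2) := by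
    rcases hq with hq | ⟨χ₀, C₀, p₀, hm₀, hle₀⟩
    · refine ⟨Y₀, fun χ => if h : ∃ Cp : Set A × I01, Matched X δ' χ Cp.1 Cp.2
          then h.choose else (∅, iZero), hY₀fin, hY₀Γ, hY₀d, ?_, Or.inl hq⟩
      intro χ hχ
      obtain ⟨Cw, q, hm⟩ := hY₀Γ hχ
      have hex : ∃ Cp : Set A × I01, Matched X δ' χ Cp.1 Cp.2 := ⟨(Cw, q), hm⟩
      simp only [dif_pos hex]
      exact hex.choose_spec
    · refine ⟨insert χ₀ Y₀,
        fun χ => if χ = χ₀ then (C₀, p₀) else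
          (if h : ∃ Cp : Set A × I01, Matched X δ' χ Cp.1 Cp.2
          then h.choose else (∅, iZero)),
        hY₀fin.insert _, Set.insert_subset ⟨C₀, p₀, hm₀⟩ hY₀Γ,
        deriv_mono (Set.subset_insert _ _) hY₀d, ?_, Or.inr ⟨χ₀, Set.mem_insert _ _,
          by simp only [if_pos rfl]; exact hle₀⟩⟩
      intro χ hχ
      by_cases he : χ = χ₀
      · subst he; simp only [if_pos rfl]; exact hm₀
      · rcases hχ with hχ | hχ
        · exact absurd hχ he
        · obtain ⟨Cw, q, hm⟩ := hY₀Γ hχ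
          have hex : ∃ Cp : Set A × I01, Matched X δ' χ Cp.1 Cp.2 := ⟨(Cw, q), hm⟩
          simp only [if_neg he, dif_pos hex]
          exact hex.choose_spec
  set l := hY₁fin.toFinset.toList with hl
  have hmem : ∀ x, x ∈ l ↔ x ∈ Y₁ := by
    intro x; rw [hl, Finset.mem_toList, Set.Finite.mem_toFinset]
  have hnd : l.Nodup := Finset.nodup_toList _
  -- the chain
  have hchain : LProof (l.reverse.foldr Formula.imp ψ) := by
    rw [List.foldr_reverse]
    apply list_deduction _ ψ
    apply deriv_mono _ hY₁d
    intro x hx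
    exact (hmem x).mpr hx
  have hndr : l.reverse.Nodup := List.nodup_reverse.mpr hnd
  have hmemr : ∀ x, x ∈ l.reverse ↔ x ∈ Y₁ := by
    intro x; rw [List.mem_reverse]; exact hmem x
  obtain ⟨U', q', hU'C, _, hbds, hder⟩ :=
    peel X δ' C ψ w l.reverse hndr
      (fun χ hχ => hw χ ((hmemr χ).mp hχ))
      (fun χ hχ => hC χ _ _ (hw χ ((hmemr χ).mp hχ)))
      ∅ iZero (by simp) (Set.empty_subset _)
      (Deriv.thm (LProof.nec ∅ hchain))
  -- monotonicity down to qt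
  have hqle : qt ≤ q' := by
    rcases hqbd with h | ⟨χ₀, hχ₀, hle₀⟩
    · subst h; exact iZero_le q'
    · exact hle₀.trans (hbds χ₀ ((hmemr χ₀).mpr hχ₀))
  have hder2 : Deriv LProof X (Formula.mod U' qt ψ) :=
    Deriv.mp (Deriv.thm (LProof.mono U' q' qt ψ hqle)) hder
  -- pad the coalition up to C
  have hpad : LProof (Formula.mod (C \ U') iZero (imp ψ ψ)) :=
    LProof.nec _ (taut_I ψ)
  have hdisj : (C \ U') ∩ U' = ∅ := by
    ext a; simp only [Set.mem_inter_iff, Set.mem_diff, Set.mem_empty_iff_false,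
      iff_false, not_and]
    rintro ⟨_, h⟩; exact fun h' => h h'
  have hcoop := LProof.coop (C \ U') U' iZero qt ψ ψ hdisj
  have hder3 : Deriv LProof X (Formula.mod ((C \ U') ∪ U') (max iZero qt) ψ) :=
    Deriv.mp (Deriv.mp (Deriv.thm hcoop) (Deriv.thm hpad)) hder2
  have h1 : (C \ U') ∪ U' = C := Set.diff_union_of_subset hU'C
  have h2 : max iZero qt = qt := max_eq_right (iZero_le qt)
  rw [h1, h2] at hder3
  exact hder3

end WCL
namespace WCL
open Formula
open scoped Classical
variable {A V : Type}

section Model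
variable (φ₀ : Formula A V)

/-- non-failure states -/
abbrev St := {s : Set (Formula A V) // MaxConsistentIn LProof (Lang φ₀) s}

lemma St_finite : Finite (St φ₀) := by
  have : Finite ↥(Lang φ₀) := (Lang_finite φ₀).to_subtype
  have hinj : Function.Injective
      (fun s : St φ₀ => ({x : ↥(Lang φ₀) | (x : Formula A V) ∈ s.1} : Set ↥(Lang φ₀))) := by
    intro s t h
    have h' := Set.ext_iff.mp h
    apply Subtype.ext
    ext σ
    constructor
    · intro hσ
      exact (h' ⟨σ, s.2.1 hσ⟩).mp hσ
    · intro hσ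
      exact (h' ⟨σ, t.2.1 hσ⟩).mpr hσ
  exact Finite.of_injective _ hinj

def QOf : Formula A V → Set ℝ
  | mod _ q _ => {(q : ℝ)}
  | _ => ∅

lemma QOf_finite (σ : Formula A V) : (QOf σ).Finite := by
  cases σ with
  | mod C q ψ => exact Set.finite_singleton _
  | var v => exact Set.finite_empty
  | falsum => exact Set.finite_empty
  | neg _ => exact Set.finite_empty
  | imp _ _ => exact Set.finite_empty

def QSet : Set ℝ := ⋃ σ ∈ Lang φ₀, QOf σ

lemma QSet_finite : (QSet φ₀).Finite :=
  (Lang_finite φ₀).biUnion (fun σ _ => QOf_finite σ)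

lemma mem_QSet {C : Set A} {p : I01} {ψ : Formula A V}
    (h : mod C p ψ ∈ Lang φ₀) : (p : ℝ) ∈ QSet φ₀ := by
  refine Set.mem_biUnion h ?_
  simp [QOf]

variable {φ₀}

/-- strengths of matched modalities -/
def muS (X : Set (Formula A V)) (δ' : A → Formula A V × ℝ) : Set ℝ :=
  {r | ∃ χ Cw q, Matched X δ' χ Cw q ∧ r = (q : ℝ)}

lemma muS_sub (hX : X ⊆ Lang φ₀) (δ' : A → Formula A V × ℝ) :
    muS X δ' ⊆ QSet φ₀ := by
  rintro r ⟨χ, Cw, q, hm, rfl⟩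
  exact mem_QSet φ₀ (hX hm.1)

lemma muS_finite (hX : X ⊆ Lang φ₀) (δ' : A → Formula A V × ℝ) :
    (muS X δ').Finite := (QSet_finite φ₀).subset (muS_sub hX δ')

noncomputable def muV (X : Set (Formula A V)) (δ' : A → Formula A V × ℝ) : ℝ :=
  sSup (insert 0 (muS X δ'))

lemma muV_mem (hX : X ⊆ Lang φ₀) (δ' : A → Formula A V × ℝ) :
    muV X δ' ∈ insert (0:ℝ) (muS X δ') :=
  (Set.insert_nonempty _ _).csSup_mem ((muS_finite hX δ').insert 0)

lemma muV_nonneg (hX : X ⊆ Lang φ₀) (δ' : A → Formula A V × ℝ) : 0 ≤ muV X δ' :=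
  le_csSup ((muS_finite hX δ').insert 0).bddAbove (Set.mem_insert _ _)

lemma le_muV (hX : X ⊆ Lang φ₀) (δ' : A → Formula A V × ℝ) {r : ℝ}
    (hr : r ∈ muS X δ') : r ≤ muV X δ' :=
  le_csSup ((muS_finite hX δ').insert 0).bddAbove (Set.mem_insert_of_mem _ hr)

lemma muV_le_one (hX : X ⊆ Lang φ₀) (δ' : A → Formula A V × ℝ) : muV X δ' ≤ 1 := by
  apply csSup_le (Set.insert_nonempty _ _)
  rintro r (rfl | ⟨χ, Cw, q, hm, rfl⟩)
  · norm_num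
  · exact q.2.2

/-- the gap-halving epsilon -/
noncomputable def epsV (φ₀ : Formula A V) (X : Set (Formula A V))
    (δ' : A → Formula A V × ℝ) : ℝ :=
  sInf (insert (1 - muV X δ')
    {r | ∃ q ∈ QSet φ₀, muV X δ' < q ∧ r = q - muV X δ'}) / 2

lemma epsSet_finite (X : Set (Formula A V)) (δ' : A → Formula A V × ℝ) :
    (insert (1 - muV X δ')
      {r | ∃ q ∈ QSet φ₀, muV X δ' < q ∧ r = q - muV X δ'}).Finite := by
  apply Set.Finite.insert
  apply ((QSet_finite φ₀).image (fun q => q - muV X δ')).subset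
  rintro r ⟨q, hq, _, rfl⟩
  exact ⟨q, hq, rfl⟩

lemma epsV_nonneg (hX : X ⊆ Lang φ₀) (δ' : A → Formula A V × ℝ) :
    0 ≤ epsV φ₀ X δ' := by
  have h : ∀ r ∈ insert (1 - muV X δ')
      {r | ∃ q ∈ QSet φ₀, muV X δ' < q ∧ r = q - muV X δ'}, (0:ℝ) ≤ r := by
    rintro r (rfl | ⟨q, hq, hlt, rfl⟩)
    · linarith [muV_le_one hX δ']
    · linarith
  have := le_csInf (Set.insert_nonempty _ _) h
  unfold epsV; linarith

lemma epsV_pos (hX : X ⊆ Lang φ₀) (δ' : A → Formula A V × ℝ)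
    (hlt : muV X δ' < 1) : 0 < epsV φ₀ X δ' := by
  have hmem := (Set.insert_nonempty (1 - muV X δ')
      {r | ∃ q ∈ QSet φ₀, muV X δ' < q ∧ r = q - muV X δ'}).csInf_mem
      (epsSet_finite X δ')
  have hpos : 0 < sInf (insert (1 - muV X δ')
      {r | ∃ q ∈ QSet φ₀, muV X δ' < q ∧ r = q - muV X δ'}) := by
    rcases hmem with h | ⟨q, hq, hlt', h⟩
    · rw [h]; linarith
    · rw [h]; linarith
  unfold epsV; linarith

lemma epsV_le_half (hX : X ⊆ Lang φ₀) (δ' : A → Formula A V × ℝ) :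
    epsV φ₀ X δ' ≤ (1 - muV X δ') / 2 := by
  have := csInf_le (epsSet_finite (φ₀ := φ₀) X δ').bddBelow
    (Set.mem_insert (1 - muV X δ') _)
  unfold epsV; linarith

lemma epsV_le_gap (hX : X ⊆ Lang φ₀) (δ' : A → Formula A V × ℝ) {q : ℝ}
    (hq : q ∈ QSet φ₀) (hlt : muV X δ' < q) : epsV φ₀ X δ' ≤ (q - muV X δ') / 2 := by
  have := csInf_le (epsSet_finite (φ₀ := φ₀) X δ').bddBelow
    (Set.mem_insert_of_mem _ ⟨q, hq, hlt, rfl⟩)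
  unfold epsV; linarith

variable (φ₀)

/-- successor states -/
def TT (s : St φ₀) (δ' : A → Formula A V × ℝ) : Set (St φ₀) :=
  {t | Forced s.1 δ' ⊆ t.1}

lemma TT_finite (s : St φ₀) (δ' : A → Formula A V × ℝ) : (TT φ₀ s δ').Finite := by
  have := St_finite φ₀
  exact Set.toFinite _

/-- mass on non-failure states -/
noncomputable def mm (s : St φ₀) (δ' : A → Formula A V × ℝ) : ℝ :=
  if TT φ₀ s δ' = ∅ then 0 else muV s.1 δ' + epsV φ₀ s.1 δ'

lemma mm_nonneg (s : St φ₀) (δ' : A → Formula A V × ℝ) : 0 ≤ mm φ₀ s δ' := by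
  unfold mm
  split
  · exact le_refl 0
  · exact add_nonneg (muV_nonneg s.2.1 δ') (epsV_nonneg s.2.1 δ')

lemma mm_le_one (s : St φ₀) (δ' : A → Formula A V × ℝ) : mm φ₀ s δ' ≤ 1 := by
  unfold mm
  split
  · norm_num
  · have h1 := epsV_le_half s.2.1 δ'
    have h2 := muV_le_one s.2.1 δ'
    linarith

lemma mm_pos (s : St φ₀) (δ' : A → Formula A V × ℝ) (hT : TT φ₀ s δ' ≠ ∅) :
    0 < mm φ₀ s δ' := by
  unfold mm
  rw [if_neg hT]
  rcases lt_or_ge (muV s.1 δ') 1 with h | h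
  · have := epsV_pos s.2.1 δ' h
    have := muV_nonneg s.2.1 δ'
    linarith
  · have := epsV_nonneg s.2.1 δ'
    linarith

/-- transition probabilities -/
noncomputable def Pc : Option (St φ₀) → (A → Formula A V × ℝ) → Option (St φ₀) → ℝ
  | none, _, none => 1
  | none, _, some _ => 0
  | some s, δ', none => 1 - mm φ₀ s δ'
  | some s, δ', some t =>
      if t ∈ TT φ₀ s δ' then mm φ₀ s δ' / (TT φ₀ s δ').ncard else 0

noncomputable instance : Fintype (St φ₀) :=
  have := St_finite φ₀; Fintype.ofFinite _

lemma sum_some (s : St φ₀) (δ' : A → Formula A V × ℝ) :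
    ∑ t : St φ₀, Pc φ₀ (some s) δ' (some t) = mm φ₀ s δ' := by
  by_cases hT : TT φ₀ s δ' = ∅
  · have : ∀ t : St φ₀, Pc φ₀ (some s) δ' (some t) = 0 := by
      intro t
      show (if t ∈ TT φ₀ s δ' then _ else _) = _
      rw [if_neg (by rw [hT]; exact Set.notMem_empty t), ]
    rw [Finset.sum_congr rfl (fun t _ => this t), Finset.sum_const, smul_zero]
    unfold mm; rw [if_pos hT]
  · have hfin := TT_finite φ₀ s δ'
    have hne : (TT φ₀ s δ').Nonempty := Set.nonempty_iff_ne_empty.mpr hT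
    have hcardpos : 0 < (TT φ₀ s δ').ncard := Set.ncard_pos hfin |>.mpr hne
    have hstep : ∀ t : St φ₀, Pc φ₀ (some s) δ' (some t) =
        if t ∈ TT φ₀ s δ' then mm φ₀ s δ' / (TT φ₀ s δ').ncard else 0 := fun t => rfl
    rw [Finset.sum_congr rfl (fun t _ => hstep t)]
    rw [← Finset.sum_filter]
    rw [Finset.sum_const]
    have hcard : (Finset.univ.filter (fun t => t ∈ TT φ₀ s δ')).card
        = (TT φ₀ s δ').ncard := by
      rw [Set.ncard_eq_toFinset_card' ]
      congr 1
      ext t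
      simp [Set.mem_toFinset]
    rw [hcard, nsmul_eq_mul]
    field_simp
lemma Pc_nonneg (s : Option (St φ₀)) (δ' : A → Formula A V × ℝ)
    (t : Option (St φ₀)) : 0 ≤ Pc φ₀ s δ' t := by
  match s, t with
  | none, none => norm_num [Pc]
  | none, some _ => norm_num [Pc]
  | some s, none =>
    show (0:ℝ) ≤ 1 - mm φ₀ s δ'
    linarith [mm_le_one φ₀ s δ']
  | some s, some t =>
    show (0:ℝ) ≤ if t ∈ TT φ₀ s δ' then mm φ₀ s δ' / (TT φ₀ s δ').ncard else 0
    split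
    · apply div_nonneg (mm_nonneg φ₀ s δ')
      positivity
    · exact le_refl 0

lemma Pc_le_one (s : Option (St φ₀)) (δ' : A → Formula A V × ℝ)
    (t : Option (St φ₀)) : Pc φ₀ s δ' t ≤ 1 := by
  match s, t with
  | none, none => norm_num [Pc]
  | none, some _ => norm_num [Pc]
  | some s, none =>
    show 1 - mm φ₀ s δ' ≤ 1
    linarith [mm_nonneg φ₀ s δ']
  | some s, some t =>
    show (if t ∈ TT φ₀ s δ' then mm φ₀ s δ' / (TT φ₀ s δ').ncard else 0) ≤ 1
    split
    case isTrue h =>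
      have hfin := TT_finite φ₀ s δ'
      have hcardpos : 0 < (TT φ₀ s δ').ncard :=
        Set.ncard_pos hfin |>.mpr ⟨t, h⟩
      have hc : (0:ℝ) < ((TT φ₀ s δ').ncard : ℝ) := by exact_mod_cast hcardpos
      rw [div_le_one hc]
      calc mm φ₀ s δ' ≤ 1 := mm_le_one φ₀ s δ'
        _ ≤ ((TT φ₀ s δ').ncard : ℝ) := by exact_mod_cast hcardpos
    case isFalse h => norm_num

lemma Pc_sum (s : Option (St φ₀)) (δ' : A → Formula A V × ℝ) :
    HasSum (Pc φ₀ s δ') 1 := by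
  have h := hasSum_fintype (Pc φ₀ s δ')
  have he : ∑ t : Option (St φ₀), Pc φ₀ s δ' t = 1 := by
    rw [Fintype.sum_option]
    match s with
    | none =>
      have : ∀ t : St φ₀, Pc φ₀ none δ' (some t) = 0 := fun t => rfl
      rw [Finset.sum_congr rfl (fun t _ => this t)]
      simp [Pc]
    | some s =>
      rw [sum_some]
      show 1 - mm φ₀ s δ' + mm φ₀ s δ' = 1
      ring
  rwa [he] at h

end Model
end WCL
namespace WCL
open Formula
open scoped Classical
variable {A V : Type}

section Model2
variable (φ₀ : Formula A V)

noncomputable def eOpt : St φ₀ ≃ ↥(({none} : Set (Option (St φ₀)))ᶜ) where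
  toFun t := ⟨some t, by simp⟩
  invFun x := x.1.get (Option.ne_none_iff_isSome.mp (by
    have := x.2
    simp only [Set.mem_compl_iff, Set.mem_singleton_iff] at this
    exact this))
  left_inv t := rfl
  right_inv x := Subtype.ext (Option.some_get _)

lemma mass_eq (s : St φ₀) (δ' : A → Formula A V × ℝ) :
    (∑' (t : ↥(({none} : Set (Option (St φ₀)))ᶜ)), Pc φ₀ (some s) δ' ↑t)
      = mm φ₀ s δ' := by
  have := St_finite φ₀
  have : Fintype ↥(({none} : Set (Option (St φ₀)))ᶜ) := Fintype.ofFinite _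
  rw [tsum_fintype]
  rw [← Equiv.sum_comp (eOpt φ₀) (fun x => Pc φ₀ (some s) δ' ↑x)]
  exact sum_some φ₀ s δ'

lemma Forced_sub_Lang (s : St φ₀) (δ' : A → Formula A V × ℝ) :
    Forced s.1 δ' ⊆ Lang φ₀ := by
  rintro χ ⟨Cw, q, hm⟩
  exact mem_Lang_of_SF φ₀ (Lang_mod φ₀ (s.2.1 hm.1))

lemma forced_incons_strength (s : St φ₀) (δ' : A → Formula A V × ℝ)
    (hnc : ¬ Consistent LProof (Forced s.1 δ'))
    {χ : Formula A V} {Cw : Set A} {q : I01} (hm : Matched s.1 δ' χ Cw q) :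
    (q : ℝ) ≤ 0 := by
  by_contra hq
  push_neg at hq
  have hd : Deriv LProof (Forced s.1 δ') Formula.falsum := not_not.mp hnc
  have hder : Deriv LProof s.1 (Formula.mod Set.univ q Formula.falsum) :=
    coop_main (fun _ _ _ _ => Set.subset_univ _) hd (Or.inr ⟨χ, Cw, q, hm, le_refl q⟩)
  have hun : LProof (Formula.neg (Formula.mod (Set.univ : Set A) q
      (Formula.falsum : Formula A V))) :=
    LProof.unach Set.univ q hq
  exact s.2.2.1 (Deriv.mp (Deriv.mp (Deriv.thm (taut_contr _)) hder) (Deriv.thm hun))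

/-- the valuation -/
def πc (v : V) : Set (Option (St φ₀)) :=
  {x | ∃ u : St φ₀, x = some u ∧ Formula.var v ∈ u.1}

theorem truth :
    ∀ (σ : Formula A V), σ ∈ Lang φ₀ → ∀ st : St φ₀,
      (SatGen ({none} : Set (Option (St φ₀))) (Pc φ₀) (πc φ₀) σ (some st) ↔ σ ∈ st.1) := by
  intro σ
  induction σ with
  | var v =>
    intro hσ st
    simp only [SatGen, πc, Set.mem_setOf_eq]
    constructor
    · rintro ⟨u, hu, hv⟩; cases Option.some.inj hu; exact hv
    · intro h; exact ⟨st, rfl, h⟩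
  | falsum =>
    intro hσ st
    simp only [SatGen]
    constructor
    · exact False.elim
    · intro h; exact st.2.2.1 (Deriv.ax h)
  | neg ψ ih =>
    intro hσ st
    have hψ : ψ ∈ Lang φ₀ := Lang_neg φ₀ hσ
    simp only [SatGen]
    rw [ih hψ st]
    exact (neg_mem_iff st.2 hψ hσ).symm
  | imp ψ χ ih1 ih2 =>
    intro hσ st
    obtain ⟨h1, h2⟩ := Lang_imp φ₀ hσ
    simp only [SatGen]
    rw [ih1 (mem_Lang_of_SF φ₀ h1) st, ih2 (mem_Lang_of_SF φ₀ h2) st]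
    exact (imp_mem_iff st.2 hσ (mem_Lang_of_SF φ₀ h1) (mem_Lang_of_SF φ₀ h2)).symm
  | mod C p ψ ih =>
    intro hσ st
    have hψSF : ψ ∈ SF φ₀ := Lang_mod φ₀ hσ
    have hψ : ψ ∈ Lang φ₀ := mem_Lang_of_SF φ₀ hψSF
    simp only [SatGen]
    constructor
    · rintro ⟨δ, hδ⟩
      by_contra hnmem
      set δ' : A → Formula A V × ℝ :=
        fun a => if h : a ∈ C then δ ⟨a, h⟩ else (Formula.falsum, 2) with hδ'def
      have hext : ∀ a : ↥C, δ' ↑a = δ a := by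
        intro a
        simp only [hδ'def, dif_pos a.2]
      obtain ⟨hmass, hsucc⟩ := hδ δ' hext
      have hCw : ∀ χ Cw q, Matched st.1 δ' χ Cw q → Cw ⊆ C := by
        intro χ Cw q hm a ha
        by_contra haC
        have h2 := hm.2 a ha
        rw [hδ'def] at h2
        simp only [dif_neg haC] at h2
        have h3 : (2:ℝ) = (q:ℝ) := congrArg Prod.snd h2
        linarith [q.2.2]
      rw [mass_eq] at hmass
      by_cases hder : Deriv LProof (Forced st.1 δ') ψ
      · have hmu_lt : muV st.1 δ' < (p:ℝ) := by
          by_contra hle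
          push_neg at hle
          rcases Set.mem_insert_iff.mp (muV_mem st.2.1 δ') with h0 | hm
          · have hp0 : p = iZero := by
              apply Subtype.ext
              have hle' : (p:ℝ) ≤ 0 := by rw [h0] at hle; exact hle
              exact le_antisymm hle' p.2.1
            exact hnmem (mem_of_deriv st.2 hσ (coop_main hCw hder (Or.inl hp0)))
          · obtain ⟨χμ, Cμ, qμ, hmμ, hrμ⟩ := hm
            have hpq : p ≤ qμ := Subtype.coe_le_coe.mp (hrμ ▸ hle)
            exact hnmem (mem_of_deriv st.2 hσ
              (coop_main hCw hder (Or.inr ⟨χμ, Cμ, qμ, hmμ, hpq⟩)))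
        by_cases hT : TT φ₀ st δ' = ∅
        · have hmm0 : mm φ₀ st δ' = 0 := by unfold mm; rw [if_pos hT]
          rw [hmm0] at hmass
          have := muV_nonneg st.2.1 δ'
          linarith
        · have hmmv : mm φ₀ st δ' = muV st.1 δ' + epsV φ₀ st.1 δ' := by
            unfold mm; rw [if_neg hT]
          have hgap := epsV_le_gap st.2.1 δ' (mem_QSet φ₀ hσ) hmu_lt
          rw [hmmv] at hmass
          linarith
      · -- the forced set does not derive ψ: find a successor without ψ
        have hconsins : Consistent LProof (insert (Formula.neg ψ) (Forced st.1 δ')) := by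
          intro hbot
          exact hder (Deriv.mp (Deriv.thm (taut_dne ψ)) (deduction hbot))
        obtain ⟨u, huX, humax⟩ := lindenbaum (Lang_finite φ₀)
          (Set.insert_subset (neg_mem_Lang φ₀ hψSF) (Forced_sub_Lang φ₀ st δ')) hconsins
        have huT : (⟨u, humax⟩ : St φ₀) ∈ TT φ₀ st δ' :=
          fun χ hχ => huX (Set.mem_insert_of_mem _ hχ)
        have hψu : ψ ∉ u := by
          intro hmemψ
          exact not_both humax.2.1 hmemψ (huX (Set.mem_insert _ _))
        have hPpos : 0 < Pc φ₀ (some st) δ' (some ⟨u, humax⟩) := by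
          show 0 < if (⟨u, humax⟩ : St φ₀) ∈ TT φ₀ st δ' then
            mm φ₀ st δ' / (TT φ₀ st δ').ncard else 0
          rw [if_pos huT]
          apply div_pos
          · apply mm_pos φ₀ st δ'
            intro h
            rw [h] at huT
            exact huT
          · have : 0 < (TT φ₀ st δ').ncard :=
              (Set.ncard_pos (TT_finite φ₀ st δ')).mpr ⟨_, huT⟩
            exact_mod_cast this
        have hsat := hsucc (some ⟨u, humax⟩) (by simp) hPpos
        rw [ih hψ ⟨u, humax⟩] at hsat
        exact hψu hsat
    · intro hmem
      refine ⟨fun _ => (ψ, (p:ℝ)), ?_⟩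
      intro δ' hext
      have hmt : Matched st.1 δ' ψ C p := ⟨hmem, fun a ha => hext ⟨a, ha⟩⟩
      constructor
      · rw [mass_eq]
        by_cases hT : TT φ₀ st δ' = ∅
        · have hnc : ¬ Consistent LProof (Forced st.1 δ') := by
            intro hcons
            obtain ⟨u, huX, humax⟩ := lindenbaum (Lang_finite φ₀)
              (Forced_sub_Lang φ₀ st δ') hcons
            have : (⟨u, humax⟩ : St φ₀) ∈ TT φ₀ st δ' := huX
            rw [hT] at this
            exact this
          have hq0 := forced_incons_strength φ₀ st δ' hnc hmt
          have hmm0 : mm φ₀ st δ' = 0 := by unfold mm; rw [if_pos hT]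
          rw [hmm0]
          exact hq0
        · have hmmv : mm φ₀ st δ' = muV st.1 δ' + epsV φ₀ st.1 δ' := by
            unfold mm; rw [if_neg hT]
          rw [hmmv]
          have h1 : (p:ℝ) ≤ muV st.1 δ' := le_muV st.2.1 δ' ⟨ψ, C, p, hmt, rfl⟩
          linarith [epsV_nonneg st.2.1 δ']
      · intro t' htF htP
        cases t' with
        | none => exact absurd rfl htF
        | some u =>
          have huT : u ∈ TT φ₀ st δ' := by
            by_contra hn
            have : Pc φ₀ (some st) δ' (some u) = 0 := by
              show (if u ∈ TT φ₀ st δ' then mm φ₀ st δ' / (TT φ₀ st δ').ncard else 0) = 0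
              rw [if_neg hn]
            rw [this] at htP
            exact lt_irrefl 0 htP
          have hψmem : ψ ∈ u.1 := huT ⟨C, p, hmt⟩
          exact (ih hψ u).mpr hψmem

/-- the main theorem body -/
theorem weak_completeness_aux [Fintype A] (φ : Formula A V) (h : ¬ LProof φ) :
    ∃ (G : Game A V) (s : G.S), s ∉ G.F ∧ ¬ SatGen G.F G.P G.pi φ s := by
  have hcons : Consistent LProof ({Formula.neg φ} : Set (Formula A V)) := by
    intro hd
    have h1 : Deriv LProof (∅ : Set (Formula A V)) (imp (Formula.neg φ) Formula.falsum) := by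
      apply deduction
      apply deriv_mono _ hd
      intro x hx
      rcases hx with rfl
      exact Set.mem_insert _ _
    exact h (LProof.mp (taut_dne φ) (deriv_empty h1))
  obtain ⟨s₀, hs₀X, hs₀max⟩ := lindenbaum (Lang_finite φ)
    (Set.singleton_subset_iff.mpr (neg_mem_Lang φ (SF_self φ))) hcons
  let G : Game A V := ⟨Option (St φ), ({none} : Set (Option (St φ))),
    Formula A V × ℝ, ⟨(Formula.falsum, 0)⟩, Pc φ, Pc_nonneg φ, Pc_le_one φ,
    Pc_sum φ, πc φ⟩
  refine ⟨G, some ⟨s₀, hs₀max⟩, ?_, ?_⟩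
  · simp [G]
  · intro hsat
    have hφL : φ ∈ Lang φ := mem_Lang_of_SF φ (SF_self φ)
    have hmem : φ ∈ s₀ := (truth φ φ hφL ⟨s₀, hs₀max⟩).mp hsat
    exact not_both hs₀max.2.1 hmem (hs₀X rfl)
end Model2
end WCL

/-- Weak completeness of L: if φ ∈ Φ and ⊬_L φ, then there is a
stochastic game and a non-failure state s of it such that s ⊮ φ. -/
theorem weak_completeness_L (A V : Type) [Fintype A] (φ : Formula A V)
    (h : ¬ LProof φ) :
    ∃ (G : Game A V) (s : G.S), s ∉ G.F ∧ ¬ SatGen G.F G.P G.pi φ s :=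
  WCL.weak_completeness_aux φ h
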